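/- The minimum number of blocks of a binary t-(n,k)-design satisfies d_{t,n,k} ≥ d_{t-1,n-1,k-1} + 1, for t ≥ 1 and n > k ≥ t whenever binary t-(n,k)-designs exist. -/

import Mathlib

/-- A binary `t`-design with block size `k` on point set `N`: a nonempty family of
`k`-element subsets of `N` such that every `t`-element subset of `N` is contained in an
even number of blocks. -/
def IsBinaryDesignOn (t : ℕ) (N : Finset ℕ) (k : ℕ) (D : Finset (Finset ℕ)) : Prop :=
  D.Nonempty ∧ (∀ B ∈ D, B ⊆ N ∧ B.card = k) ∧
    ∀ S ⊆ N, S.card = t → Even ((D.filter fun B => S ⊆ B).card)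

/-- A binary `t`-`(n,k)`-design on the point set `{1,…,n}`. -/
def IsBinaryDesign (t n k : ℕ) (D : Finset (Finset ℕ)) : Prop :=
  IsBinaryDesignOn t (Finset.Icc 1 n) k D

/-- `d_{t,n,k}`: minimum number of blocks of a binary `t`-`(n,k)`-design. -/
noncomputable def minBlocks (t n k : ℕ) : ℕ :=
  sInf {m | ∃ D : Finset (Finset ℕ), IsBinaryDesign t n k D ∧ D.card = m}

/-- Any binary design with `t ≤ k` has two distinct blocks. -/
lemma two_blocks {t n k : ℕ} {D : Finset (Finset ℕ)} (hD : IsBinaryDesign t n k D)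
    (htk : t ≤ k) : ∃ B ∈ D, ∃ B' ∈ D, B ≠ B' := by
  obtain ⟨⟨B, hB⟩, hblocks, heven⟩ := hD
  obtain ⟨hBsub, hBcard⟩ := hblocks B hB
  obtain ⟨S, hSB, hScard⟩ := Finset.exists_subset_card_eq (s := B) (n := t) (by omega)
  have he := heven S (hSB.trans hBsub) hScard
  have hBf : B ∈ D.filter fun B => S ⊆ B := Finset.mem_filter.2 ⟨hB, hSB⟩
  have h1 : 1 < (D.filter fun B => S ⊆ B).card := by
    rcases he with ⟨c, hc⟩
    have : 0 < (D.filter fun B => S ⊆ B).card := Finset.card_pos.2 ⟨B, hBf⟩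
    omega
  obtain ⟨B', hB', hne⟩ := Finset.exists_mem_ne h1 B
  exact ⟨B', (Finset.mem_filter.1 hB').1, B, hB, hne⟩

/-- Relabelling a binary design by a permutation preserving the point set. -/
lemma relabel_swap {t n k p : ℕ} (hp : p ∈ Finset.Icc 1 n)
    {D : Finset (Finset ℕ)} (hD : IsBinaryDesign t n k D) (hn : 1 ≤ n) :
    IsBinaryDesign t n k (D.image (Finset.image (Equiv.swap p n))) ∧
      (D.image (Finset.image (Equiv.swap p n))).card = D.card := by
  set σ : ℕ → ℕ := ⇑(Equiv.swap p n) with hσ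
  have hσinj : Function.Injective σ := (Equiv.swap p n).injective
  have hImInj : Function.Injective (Finset.image σ) := Finset.image_injective hσinj
  have hnIcc : n ∈ Finset.Icc 1 n := Finset.mem_Icc.2 ⟨hn, le_rfl⟩
  have hmaps : ∀ x ∈ Finset.Icc 1 n, σ x ∈ Finset.Icc 1 n := by
    intro x hx
    rcases eq_or_ne x p with rfl | hxp
    · simpa [σ, Equiv.swap_apply_left] using hnIcc
    rcases eq_or_ne x n with rfl | hxn
    · simpa [σ, Equiv.swap_apply_right] using hp
    · simpa [σ, Equiv.swap_apply_of_ne_of_ne hxp hxn] using hx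
  obtain ⟨hne, hblocks, heven⟩ := hD
  refine ⟨⟨hne.image _, ?_, ?_⟩, Finset.card_image_of_injective _ hImInj⟩
  · intro B hB
    obtain ⟨C, hC, rfl⟩ := Finset.mem_image.1 hB
    obtain ⟨hCsub, hCcard⟩ := hblocks C hC
    constructor
    · intro x hx
      obtain ⟨y, hy, rfl⟩ := Finset.mem_image.1 hx
      exact hmaps y (hCsub hy)
    · rw [Finset.card_image_of_injective _ hσinj, hCcard]
  · intro S hS hScard
    have hσσ : ∀ x, σ (σ x) = x := fun x => Equiv.swap_apply_self p n x
    set S' : Finset ℕ := S.image σ with hS'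
    have hS'sub : S' ⊆ Finset.Icc 1 n := by
      intro x hx
      obtain ⟨y, hy, rfl⟩ := Finset.mem_image.1 hx
      exact hmaps y (hS hy)
    have hS'card : S'.card = t := by rw [hS', Finset.card_image_of_injective _ hσinj, hScard]
    have key : ((D.image (Finset.image σ)).filter fun B => S ⊆ B).card
        = ((D.filter fun B => S' ⊆ B)).card := by
      rw [Finset.filter_image, Finset.card_image_of_injective _ hImInj]
      congr 1
      apply Finset.filter_congr
      intro C _
      constructor
      · intro h x hx
        obtain ⟨y, hy, rfl⟩ := Finset.mem_image.1 hx
        have := h hy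
        obtain ⟨z, hz, hzy⟩ := Finset.mem_image.1 this
        have : z = σ y := by
          have := congrArg σ hzy
          rwa [hσσ] at this
        rwa [← this]
      · intro h x hx
        have : σ x ∈ S' := Finset.mem_image_of_mem σ hx
        have hσx := h this
        have : σ (σ x) ∈ C.image σ := Finset.mem_image_of_mem σ hσx
        rwa [hσσ] at this
    rw [key]
    exact heven S' hS'sub hS'card

/-- Derived design at the point `n`. -/
lemma derived {t n k : ℕ} (ht : 1 ≤ t) (hk : 1 ≤ k) (hn : 1 ≤ n)
    {D : Finset (Finset ℕ)} (hD : IsBinaryDesign t n k D)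
    (hmem : ∃ B ∈ D, n ∈ B) :
    IsBinaryDesign (t - 1) (n - 1) (k - 1)
      ((D.filter fun B => n ∈ B).image fun B => B.erase n) ∧
    ((D.filter fun B => n ∈ B).image fun B => B.erase n).card
      = (D.filter fun B => n ∈ B).card := by
  obtain ⟨hne, hblocks, heven⟩ := hD
  have hInjOn : Set.InjOn (fun B => Finset.erase B n) (D.filter fun B => n ∈ B) := by
    intro A hA B hB hAB
    have hAn : n ∈ A := (Finset.mem_filter.1 hA).2
    have hBn : n ∈ B := (Finset.mem_filter.1 hB).2
    have := congrArg (insert n) hAB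
    simpa [Finset.insert_erase hAn, Finset.insert_erase hBn] using this
  have hcard : ((D.filter fun B => n ∈ B).image fun B => B.erase n).card
      = (D.filter fun B => n ∈ B).card := Finset.card_image_of_injOn hInjOn
  refine ⟨⟨?_, ?_, ?_⟩, hcard⟩
  · obtain ⟨B, hB, hnB⟩ := hmem
    exact ⟨B.erase n, Finset.mem_image_of_mem _ (Finset.mem_filter.2 ⟨hB, hnB⟩)⟩
  · intro C hC
    obtain ⟨B, hB, rfl⟩ := Finset.mem_image.1 hC
    obtain ⟨hBD, hBn⟩ := Finset.mem_filter.1 hB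
    obtain ⟨hBsub, hBcard⟩ := hblocks B hBD
    constructor
    · intro x hx
      obtain ⟨hxn, hxB⟩ := Finset.mem_erase.1 hx
      have := Finset.mem_Icc.1 (hBsub hxB)
      exact Finset.mem_Icc.2 ⟨this.1, by omega⟩
    · rw [Finset.card_erase_of_mem hBn, hBcard]
  · intro S hS hScard
    have hnS : n ∉ S := by
      intro h
      have := Finset.mem_Icc.1 (hS h)
      omega
    have hins_sub : insert n S ⊆ Finset.Icc 1 n := by
      intro x hx
      rcases Finset.mem_insert.1 hx with rfl | hxS
      · exact Finset.mem_Icc.2 ⟨hn, le_rfl⟩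
      · have := Finset.mem_Icc.1 (hS hxS)
        exact Finset.mem_Icc.2 ⟨this.1, by omega⟩
    have hins_card : (insert n S).card = t := by
      rw [Finset.card_insert_of_notMem hnS, hScard]; omega
    have key : (((D.filter fun B => n ∈ B).image fun B => B.erase n).filter
          fun C => S ⊆ C).card = ((D.filter fun B => insert n S ⊆ B)).card := by
      rw [Finset.filter_image]
      rw [Finset.card_image_of_injOn (hInjOn.mono (by
        intro x hx
        exact Finset.mem_coe.2 (Finset.filter_subset _ _ (Finset.mem_coe.1 hx))))]
      rw [Finset.filter_filter]
      congr 1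
      apply Finset.filter_congr
      intro B _
      simp only [Finset.insert_subset_iff]
      constructor
      · rintro ⟨hnB, hSB⟩
        exact ⟨hnB, fun x hx => (Finset.mem_erase.1 (hSB hx)).2⟩
      · rintro ⟨hnB, hSB⟩
        exact ⟨hnB, fun x hx => Finset.mem_erase.2 ⟨by rintro rfl; exact hnS hx, hSB hx⟩⟩
    rw [key]
    exact heven (insert n S) hins_sub hins_card

theorem stmt6 (t n k : ℕ) (ht : 1 ≤ t) (htk : t ≤ k) (hkn : k < n)
    (hex : ∃ D : Finset (Finset ℕ), IsBinaryDesign t n k D) :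
    minBlocks (t - 1) (n - 1) (k - 1) + 1 ≤ minBlocks t n k := by
  have hn : 1 ≤ n := by omega
  have hk : 1 ≤ k := le_trans ht htk
  -- get a design achieving the minimum
  have hne : {m | ∃ D : Finset (Finset ℕ), IsBinaryDesign t n k D ∧ D.card = m}.Nonempty := by
    obtain ⟨D, hD⟩ := hex
    exact ⟨D.card, D, hD, rfl⟩
  obtain ⟨D, hD, hDcard⟩ := Nat.sInf_mem hne
  -- two distinct blocks, yields a point p in one but not the other
  obtain ⟨B, hB, B', hB', hBB'⟩ := two_blocks hD htk
  have hcards : B.card = B'.card := by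
    rw [(hD.2.1 B hB).2, (hD.2.1 B' hB').2]
  have hdiff : (B \ B').Nonempty := by
    rw [Finset.sdiff_nonempty]
    intro hsub
    exact hBB' (Finset.eq_of_subset_of_card_le hsub (le_of_eq hcards.symm))
  obtain ⟨p, hp⟩ := hdiff
  have hpB : p ∈ B := (Finset.mem_sdiff.1 hp).1
  have hpB' : p ∉ B' := (Finset.mem_sdiff.1 hp).2
  have hpIcc : p ∈ Finset.Icc 1 n := (hD.2.1 B hB).1 hpB
  -- relabel so that the distinguished point is n
  set σ : ℕ → ℕ := ⇑(Equiv.swap p n) with hσdef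
  obtain ⟨hD₂, hD₂card⟩ := relabel_swap hpIcc hD hn
  set D₂ := D.image (Finset.image σ) with hD₂def
  -- key facts about the relabelled design
  have hσp : σ p = n := Equiv.swap_apply_left p n
  have hmem : ∃ C ∈ D₂, n ∈ C := by
    refine ⟨B.image σ, Finset.mem_image_of_mem _ hB, ?_⟩
    rw [← hσp]
    exact Finset.mem_image_of_mem σ hpB
  have hmiss : n ∉ B'.image σ := by
    intro h
    obtain ⟨y, hy, hyn⟩ := Finset.mem_image.1 h
    have : y = p := (Equiv.swap p n).injective (show σ y = σ p by rw [hyn, hσp])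
    exact hpB' (this ▸ hy)
  have hB'D₂ : B'.image σ ∈ D₂ := Finset.mem_image_of_mem _ hB'
  -- derived design
  obtain ⟨hD₃, hD₃card⟩ := derived ht hk hn hD₂ hmem
  set D₃ := (D₂.filter fun B => n ∈ B).image fun B => B.erase n with hD₃def
  have hmin3 : minBlocks (t - 1) (n - 1) (k - 1) ≤ D₃.card :=
    Nat.sInf_le ⟨D₃, hD₃, rfl⟩
  have hfilter_lt : (D₂.filter fun B => n ∈ B).card < D₂.card := by
    apply Finset.card_lt_card
    constructor
    · exact Finset.filter_subset _ _
    · intro hsub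
      have := Finset.mem_filter.1 (hsub hB'D₂)
      exact hmiss this.2
  have hEq : minBlocks t n k = D.card := hDcard.symm
  omega
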